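/- Let ω₁, …, ω_n be independent real continuous random variables, each with maximum density at most 1. Then for any g ≥ 0, E[ |{x ∈ {0,1}^n : Σ_{i=1}^n x_i·|ω_i| ≤ g}| ] ≤ e^{2√(2ng)}. -/

import Mathlib

open MeasureTheory ProbabilityTheory ENNReal

/-- A real random variable (with law `μ`) is continuous with maximum density at most `M`
if its law has a density `f` w.r.t. Lebesgue measure with `0 ≤ f ≤ M` pointwise. -/
def HasMaxDensityLE (μ : Measure ℝ) (M : ℝ) : Prop :=
  ∃ f : ℝ → ℝ, μ = MeasureTheory.volume.withDensity (fun x => ENNReal.ofReal (f x)) ∧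
    ∀ x, 0 ≤ f x ∧ f x ≤ M

lemma aux_integral (g : ℝ) (hg : 0 ≤ g) (k : ℕ) :
    ∫⁻ t : ℝ, (if 0 ≤ g - |t| then ENNReal.ofReal ((2*(g-|t|))^k / (Nat.factorial k)) else 0) ∂volume
      = ENNReal.ofReal ((2*g)^(k+1)/(Nat.factorial (k+1))) := by
  set φ : ℝ → ℝ := fun t => (2*(g-|t|))^k / (Nat.factorial k) with hφdef
  have hφc : Continuous φ := by
    apply Continuous.div_const
    exact ((continuous_const.mul (continuous_const.sub continuous_abs)).pow k)
  set h : ℝ → ℝ := Set.indicator (Set.Icc (-g) g) φ with hhdef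
  have hpt : ∀ t : ℝ, (if 0 ≤ g - |t| then ENNReal.ofReal ((2*(g-|t|))^k / (Nat.factorial k)) else 0)
      = ENNReal.ofReal (h t) := by
    intro t
    by_cases ht : 0 ≤ g - |t|
    · rw [if_pos ht, hhdef, Set.indicator_of_mem]
      rw [Set.mem_Icc, ← abs_le]; linarith
    · rw [if_neg ht, hhdef, Set.indicator_of_notMem, ENNReal.ofReal_zero]
      rw [Set.mem_Icc, ← abs_le]; intro hc; exact ht (by linarith)
  simp_rw [hpt]
  have hint : Integrable h volume := by
    refine (hφc.integrableOn_Icc).integrable_indicator measurableSet_Icc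
  have hnn : 0 ≤ᵐ[volume] h := by
    refine Filter.Eventually.of_forall (fun t => ?_)
    refine Set.indicator_nonneg (fun x hx => ?_) t
    have : (0:ℝ) ≤ g - |x| := by
      rw [Set.mem_Icc, ← abs_le] at hx; linarith
    positivity
  rw [← MeasureTheory.ofReal_integral_eq_lintegral_ofReal hint hnn]
  congr 1
  rw [hhdef, MeasureTheory.integral_indicator measurableSet_Icc,
    MeasureTheory.integral_Icc_eq_integral_Ioc, ← intervalIntegral.integral_of_le (by linarith)]
  have hsplit : (∫ t in (-g)..(0:ℝ), φ t) + ∫ t in (0:ℝ)..g, φ t = ∫ t in (-g)..g, φ t :=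
    intervalIntegral.integral_add_adjacent_intervals
      (hφc.intervalIntegrable _ _) (hφc.intervalIntegrable _ _)
  have hneg : (∫ t in (-g)..(0:ℝ), φ t) = ∫ t in (0:ℝ)..g, φ t := by
    have := intervalIntegral.integral_comp_neg (a := 0) (b := g) φ
    simp only [neg_zero] at this
    rw [← this]
    congr 1; ext t; simp [hφdef, abs_neg]
  have hhalf : (∫ t in (0:ℝ)..g, φ t) = (2^k / (Nat.factorial k)) * (g^(k+1)/(k+1)) := by
    have h1 : (∫ t in (0:ℝ)..g, φ t) = ∫ t in (0:ℝ)..g, (2^k/(Nat.factorial k)) * (g - t)^k := by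
      apply intervalIntegral.integral_congr
      intro t ht
      rw [Set.uIcc_of_le hg, Set.mem_Icc] at ht
      have habs : |t| = t := abs_of_nonneg ht.1
      simp only [hφdef, habs, mul_pow]
      ring
    rw [h1, intervalIntegral.integral_const_mul]
    congr 1
    have h2 : (∫ t in (0:ℝ)..g, (g - t)^k) = ∫ t in (g-g)..(g-0), t^k :=
      intervalIntegral.integral_comp_sub_left (a := 0) (b := g) (fun t => t^k) g
    rw [h2]
    simp [integral_pow]
  rw [← hsplit, hneg, hhalf]
  have hk : ((Nat.factorial k) : ℝ) ≠ 0 := by positivity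
  have hk1 : ((k:ℝ) + 1) ≠ 0 := by positivity
  rw [Nat.factorial_succ]
  push_cast
  field_simp
  ring

lemma measure_le_volume {ν : Measure ℝ} (h : HasMaxDensityLE ν 1) : ν ≤ volume := by
  obtain ⟨f, hν, hf⟩ := h
  rw [Measure.le_iff]
  intro A hA
  rw [hν, withDensity_apply _ hA]
  calc ∫⁻ a in A, ENNReal.ofReal (f a) ∂volume
      ≤ ∫⁻ a in A, 1 ∂volume := lintegral_mono fun a => by
        simpa using ENNReal.ofReal_le_one.2 (hf a).2
    _ = volume A := setLIntegral_one A

lemma measF {n : ℕ} (g : ℝ) (s : Finset (Fin n)) :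
    Measurable (fun w : Fin n → ℝ => if ∑ i ∈ s, |w i| ≤ g then (1:ℝ≥0∞) else 0) := by
  have hm : Measurable (fun w : Fin n → ℝ => ∑ i ∈ s, |w i|) :=
    Finset.measurable_sum _ (fun i _ => (measurable_pi_apply i).abs)
  exact Measurable.ite (measurableSet_le hm measurable_const) measurable_const measurable_const

lemma key {n : ℕ} (μ : Fin n → Measure ℝ) [∀ i, IsProbabilityMeasure (μ i)]
    (hdens : ∀ i, HasMaxDensityLE (μ i) 1) (s : Finset (Fin n)) :
    ∀ (g : ℝ) (x : Fin n → ℝ),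
      (∫⋯∫⁻_s, (fun w => if ∑ i ∈ s, |w i| ≤ g then (1:ℝ≥0∞) else 0) ∂μ) x
        ≤ (if 0 ≤ g then ENNReal.ofReal ((2*g)^s.card / (Nat.factorial s.card)) else 0) := by
  classical
  induction s using Finset.induction_on with
  | empty =>
    intro g x
    simp only [lmarginal_empty, Finset.sum_empty, Finset.card_empty]
    split_ifs with h
    · simp [h]
    · simp [h]
  | @insert j s hj ih =>
    intro g x
    rw [lmarginal_insert _ (measF g (insert j s)) hj]
    have hinner : ∀ t : ℝ,
        (∫⋯∫⁻_s, (fun w => if ∑ i ∈ insert j s, |w i| ≤ g then (1:ℝ≥0∞) else 0) ∂μ)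
          (Function.update x j t)
        = (∫⋯∫⁻_s, (fun w => if ∑ i ∈ s, |w i| ≤ g - |t| then (1:ℝ≥0∞) else 0) ∂μ)
          (Function.update x j t) := by
      intro t
      simp only [lmarginal]
      apply lintegral_congr
      intro y
      have hjt : Function.updateFinset (Function.update x j t) s y j = t := by
        rw [Function.updateFinset_def]
        simp [hj]
      rw [Finset.sum_insert hj, hjt]
      refine if_congr ?_ rfl rfl
      constructor <;> intro h <;> linarith
    simp_rw [hinner]
    calc ∫⁻ t, (∫⋯∫⁻_s, (fun w => if ∑ i ∈ s, |w i| ≤ g - |t| then (1:ℝ≥0∞) else 0) ∂μ)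
            (Function.update x j t) ∂μ j
        ≤ ∫⁻ t, (if 0 ≤ g - |t| then
            ENNReal.ofReal ((2*(g-|t|))^s.card / (Nat.factorial s.card)) else 0) ∂μ j :=
          lintegral_mono fun t => ih (g - |t|) (Function.update x j t)
      _ ≤ ∫⁻ t, (if 0 ≤ g - |t| then
            ENNReal.ofReal ((2*(g-|t|))^s.card / (Nat.factorial s.card)) else 0) ∂volume :=
          lintegral_mono' (measure_le_volume (hdens j)) le_rfl
      _ ≤ (if 0 ≤ g then
            ENNReal.ofReal ((2*g)^(insert j s).card / (Nat.factorial (insert j s).card)) else 0) := by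
          by_cases h0 : 0 ≤ g
          · rw [aux_integral g h0 s.card, if_pos h0, Finset.card_insert_of_notMem hj]
          · have hz : ∀ t : ℝ, (if 0 ≤ g - |t| then
                ENNReal.ofReal ((2*(g-|t|))^s.card / (Nat.factorial s.card)) else 0) = 0 := by
              intro t
              rw [if_neg]
              intro hc
              exact h0 (le_trans hc (by simp [abs_nonneg]))
            simp_rw [hz]
            simp [h0]

lemma count_eq {n : ℕ} (g : ℝ) (w : Fin n → ℝ) :
    (({x : Fin n → ℝ | (∀ i, x i = 0 ∨ x i = 1) ∧
        ∑ i, x i * |w i| ≤ g}.ncard : ℝ≥0∞))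
      = ∑ s : Finset (Fin n), (if ∑ i ∈ s, |w i| ≤ g then (1:ℝ≥0∞) else 0) := by
  classical
  set e : Finset (Fin n) → (Fin n → ℝ) := fun s i => if i ∈ s then 1 else 0 with he
  have hinj : Function.Injective e := by
    intro s t hst
    ext i
    have := congrFun hst i
    by_cases hi : i ∈ s <;> by_cases hit : i ∈ t <;>
      simp [he, hi, hit] at this ⊢
  have hsum : ∀ s : Finset (Fin n), ∑ i, e s i * |w i| = ∑ i ∈ s, |w i| := by
    intro s
    rw [he]
    simp only [ite_mul, one_mul, zero_mul]
    rw [Finset.sum_ite_mem, Finset.univ_inter]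
  have hset : {x : Fin n → ℝ | (∀ i, x i = 0 ∨ x i = 1) ∧ ∑ i, x i * |w i| ≤ g}
      = e '' {s : Finset (Fin n) | ∑ i ∈ s, |w i| ≤ g} := by
    ext x
    constructor
    · rintro ⟨h01, hle⟩
      refine ⟨Finset.univ.filter (fun i => x i = 1), ?_, ?_⟩
      · show ∑ i ∈ _, |w i| ≤ g
        rw [← hsum]
        convert hle using 2 with i
        rcases h01 i with h | h <;> simp [he, h]
      · funext i
        rcases h01 i with h | h <;> simp [he, h]
    · rintro ⟨s, hs, rfl⟩
      refine ⟨fun i => by by_cases hi : i ∈ s <;> simp [he, hi], ?_⟩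
      rw [hsum]; exact hs
  rw [hset, Set.ncard_image_of_injective _ hinj]
  have : {s : Finset (Fin n) | ∑ i ∈ s, |w i| ≤ g}
      = ↑(Finset.univ.filter (fun s : Finset (Fin n) => ∑ i ∈ s, |w i| ≤ g)) := by
    ext s; simp
  rw [this, Set.ncard_coe_finset, Finset.card_filter]
  push_cast
  rfl

lemma real_ineq (n : ℕ) (g : ℝ) (hg : 0 ≤ g) :
    ∑ m ∈ Finset.range (n+1), (n.choose m : ℝ) * ((2*g)^m / Nat.factorial m)
      ≤ Real.exp (2 * Real.sqrt (2*n*g)) := by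
  set a := Real.sqrt (2*n*g) with ha
  have ha0 : 0 ≤ a := Real.sqrt_nonneg _
  have ha2 : a^2 = 2*n*g := Real.sq_sqrt (by positivity)
  calc ∑ m ∈ Finset.range (n+1), (n.choose m : ℝ) * ((2*g)^m / Nat.factorial m)
      ≤ ∑ m ∈ Finset.range (n+1), (a^m / Nat.factorial m)^2 := by
        apply Finset.sum_le_sum
        intro m _
        have h1 : (n.choose m : ℝ) * ((2*g)^m / Nat.factorial m)
            ≤ ((n:ℝ)^m / Nat.factorial m) * ((2*g)^m / Nat.factorial m) := by
          apply mul_le_mul_of_nonneg_right (Nat.choose_le_pow_div m n)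
          positivity
        refine h1.trans_eq ?_
        have h2 : (a^m)^2 = (n:ℝ)^m * (2*g)^m := by
          rw [← pow_mul, mul_comm m 2, pow_mul, ha2]
          rw [mul_pow, mul_pow]
          ring
        have hm : (Nat.factorial m : ℝ) ≠ 0 := by positivity
        field_simp
        rw [h2]
    _ ≤ (∑ m ∈ Finset.range (n+1), a^m / Nat.factorial m)^2 :=
        Finset.sum_sq_le_sq_sum_of_nonneg (fun m _ => by positivity)
    _ ≤ (Real.exp a)^2 := by
        apply pow_le_pow_left₀ (Finset.sum_nonneg fun m _ => by positivity)
        exact Real.sum_le_exp_of_nonneg ha0 (n+1)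
    _ = Real.exp (2 * a) := by
        rw [← Real.exp_nat_mul]
        norm_num [mul_comm]

/-- if `ω₁, …, ωₙ` are independent real random variables with maximum
density at most `1`, then for any `g ≥ 0`,
`E[ |{x ∈ {0,1}ⁿ : Σᵢ xᵢ·|ωᵢ| ≤ g}| ] ≤ e^{2√(2ng)}`. -/
theorem stmt_14 (n : ℕ) (g : ℝ) (hg : 0 ≤ g) (μ : Fin n → Measure ℝ)
    [∀ i, IsProbabilityMeasure (μ i)]
    (hdens : ∀ i, HasMaxDensityLE (μ i) 1) :
    ∫⁻ w, (({x : Fin n → ℝ | (∀ i, x i = 0 ∨ x i = 1) ∧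
        ∑ i, x i * |w i| ≤ g}.ncard : ℝ≥0∞)) ∂(Measure.pi μ)
      ≤ ENNReal.ofReal (Real.exp (2 * Real.sqrt (2 * n * g))) := by
  classical
  have hterm : ∀ s : Finset (Fin n),
      (∫⁻ w, (if ∑ i ∈ s, |w i| ≤ g then (1:ℝ≥0∞) else 0) ∂(Measure.pi μ))
        ≤ ENNReal.ofReal ((2*g)^s.card / (Nat.factorial s.card)) := by
    intro s
    set c := ENNReal.ofReal ((2*g)^s.card / (Nat.factorial s.card)) with hc
    calc (∫⁻ w, (if ∑ i ∈ s, |w i| ≤ g then (1:ℝ≥0∞) else 0) ∂(Measure.pi μ))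
        ≤ ∫⁻ _w, c ∂(Measure.pi μ) := by
          apply lintegral_le_of_lmarginal_le s (measF g s) measurable_const
          intro x
          have hco : (∫⋯∫⁻_s, (fun _ => c) ∂μ) x = c := by
            simp [lmarginal, lintegral_const]
          rw [hco]
          have := key μ hdens s g x
          rwa [if_pos hg] at this
      _ = c := by simp [lintegral_const]
  calc ∫⁻ w, (({x : Fin n → ℝ | (∀ i, x i = 0 ∨ x i = 1) ∧
        ∑ i, x i * |w i| ≤ g}.ncard : ℝ≥0∞)) ∂(Measure.pi μ)
      = ∑ s : Finset (Fin n),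
          ∫⁻ w, (if ∑ i ∈ s, |w i| ≤ g then (1:ℝ≥0∞) else 0) ∂(Measure.pi μ) := by
        rw [lintegral_congr (fun w => count_eq g w)]
        exact lintegral_finset_sum _ (fun s _ => measF g s)
    _ ≤ ∑ s : Finset (Fin n), ENNReal.ofReal ((2*g)^s.card / (Nat.factorial s.card)) :=
        Finset.sum_le_sum (fun s _ => hterm s)
    _ = ∑ m ∈ Finset.range (n+1),
          (n.choose m) • ENNReal.ofReal ((2*g)^m / (Nat.factorial m)) := by
        rw [← Finset.powerset_univ, Finset.sum_powerset_apply_card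
          (fun m => ENNReal.ofReal ((2*g)^m / (Nat.factorial m)))]
        simp [Finset.card_univ]
    _ = ENNReal.ofReal (∑ m ∈ Finset.range (n+1),
          (n.choose m : ℝ) * ((2*g)^m / (Nat.factorial m))) := by
        rw [ENNReal.ofReal_sum_of_nonneg (fun m _ => by positivity)]
        refine Finset.sum_congr rfl (fun m _ => ?_)
        rw [nsmul_eq_mul, ENNReal.ofReal_mul (by positivity), ENNReal.ofReal_natCast]
    _ ≤ ENNReal.ofReal (Real.exp (2 * Real.sqrt (2 * n * g))) :=
        ENNReal.ofReal_le_ofReal (real_ineq n g hg)
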